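/- Uniform convergence of the averaged gradient estimate: Fix μ > 0 and define the averaged gradient estimate ḡ(θ, a) := (1/T)·∫₀ᵀ m(τ, a)·Ĵ_μ(θ + a·s(τ)) dτ for θ ∈ S and a > 0 small enough that θ + a·s(τ) ∈ S for all τ ∈ [0, T]. Then for every compact set K ⊂ S and every ε > 0 there exists a* > 0 such that for all a ∈ (0, a*): θ + a·s(τ) ∈ S for every θ ∈ K and τ ∈ [0, T], and ‖ḡ(θ, a) − ∇Ĵ_μ(θ)‖ ≤ ε for every θ ∈ K. -/

import Mathlib

set_option maxHeartbeats 1000000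

open Real Set
open scoped RealInnerProductSpace

private lemma aux_int_sin (c T : ℝ) (hz : ∃ z : ℤ, c * T = 2 * π * z) :
    ∫ τ in (0:ℝ)..T, sin (c * τ) = 0 := by
  obtain ⟨z, hz⟩ := hz
  by_cases hc : c = 0
  · simp [hc]
  · have h1 : (c * ∫ τ in (0:ℝ)..T, sin (c * τ)) = ∫ x in (c*0)..(c*T), sin x :=
      intervalIntegral.mul_integral_comp_mul_left (f := sin) (c := c)
    have h2 : ∫ x in (c*0)..(c*T), sin x = cos (c*0) - cos (c*T) := integral_sin
    have h3 : cos (c * T) = 1 := by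
      rw [hz]; rw [show 2 * π * (z:ℝ) = (z:ℝ) * (2*π) by ring]; exact cos_int_mul_two_pi z
    have h4 : (c * ∫ τ in (0:ℝ)..T, sin (c * τ)) = 0 := by rw [h1, h2, h3]; simp
    exact (mul_eq_zero.mp h4).resolve_left hc

private lemma aux_int_cos (c T : ℝ) (hc : c ≠ 0) (hz : ∃ z : ℤ, c * T = 2 * π * z) :
    ∫ τ in (0:ℝ)..T, cos (c * τ) = 0 := by
  obtain ⟨z, hz⟩ := hz
  have h1 : (c * ∫ τ in (0:ℝ)..T, cos (c * τ)) = ∫ x in (c*0)..(c*T), cos x :=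
    intervalIntegral.mul_integral_comp_mul_left (f := cos) (c := c)
  have h2 : ∫ x in (c*0)..(c*T), cos x = sin (c*T) - sin (c*0) := integral_cos
  have h3 : sin (c * T) = 0 := by
    rw [hz, show 2 * π * (z:ℝ) = (2*z:ℤ) * π by push_cast; ring]; exact sin_int_mul_pi _
  have h4 : (c * ∫ τ in (0:ℝ)..T, cos (c * τ)) = 0 := by rw [h1, h2, h3]; simp
  exact (mul_eq_zero.mp h4).resolve_left hc

private lemma aux_int_sin_sin (b c T : ℝ) (hb : 0 < b) (hc : 0 < c)
    (hzb : ∃ z : ℤ, b * T = 2 * π * z) (hzc : ∃ z : ℤ, c * T = 2 * π * z) :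
    ∫ τ in (0:ℝ)..T, sin (b * τ) * sin (c * τ) = if b = c then T / 2 else 0 := by
  have key : ∀ τ : ℝ, sin (b*τ) * sin (c*τ) = (cos ((b-c)*τ) - cos ((b+c)*τ)) / 2 := by
    intro τ
    have := Real.cos_sub_cos ((b-c)*τ) ((b+c)*τ)
    rw [show ((b-c)*τ + (b+c)*τ)/2 = b*τ by ring, show ((b-c)*τ - (b+c)*τ)/2 = -(c*τ) by ring] at this
    rw [Real.sin_neg] at this
    linarith [this]
  obtain ⟨zb, hzb⟩ := hzb
  obtain ⟨zc, hzc⟩ := hzc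
  have hbc : b + c ≠ 0 := by positivity
  have hsum : ∫ τ in (0:ℝ)..T, cos ((b+c)*τ) = 0 :=
    aux_int_cos _ _ hbc ⟨zb + zc, by push_cast; rw [show (b+c)*T = b*T + c*T by ring, hzb, hzc]; ring⟩
  have hint1 : IntervalIntegrable (fun τ => cos ((b-c)*τ)) MeasureTheory.volume 0 T :=
    (Real.continuous_cos.comp (continuous_const.mul continuous_id)).intervalIntegrable _ _
  have hint2 : IntervalIntegrable (fun τ => cos ((b+c)*τ)) MeasureTheory.volume 0 T :=
    (Real.continuous_cos.comp (continuous_const.mul continuous_id)).intervalIntegrable _ _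
  rw [show (fun τ => sin (b*τ) * sin (c*τ)) = fun τ => (cos ((b-c)*τ) - cos ((b+c)*τ)) / 2 from funext key]
  rw [intervalIntegral.integral_div, intervalIntegral.integral_sub hint1 hint2, hsum]
  by_cases hbc' : b = c
  · subst hbc'
    simp only [sub_self, zero_mul, Real.cos_zero, if_pos rfl]
    rw [intervalIntegral.integral_const]
    simp
  · have hdiff : ∫ τ in (0:ℝ)..T, cos ((b-c)*τ) = 0 :=
      aux_int_cos _ _ (sub_ne_zero.mpr hbc')
        ⟨zb - zc, by push_cast; rw [show (b-c)*T = b*T - c*T by ring, hzb, hzc]; ring⟩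
    rw [hdiff, if_neg hbc']
    simp

theorem uniform_convergence_of_averaged_gradient
    {n : ℕ} (hn : 1 ≤ n)
    (Jstar : ℝ) (θs : EuclideanSpace ℝ (Fin n))
    (H : EuclideanSpace ℝ (Fin n) →L[ℝ] EuclideanSpace ℝ (Fin n))
    (Hsymm : ∀ x y : EuclideanSpace ℝ (Fin n), ⟪H x, y⟫ = ⟪x, H y⟫)
    (Hpos : ∀ x : EuclideanSpace ℝ (Fin n), x ≠ 0 → 0 < ⟪x, H x⟫)
    (J : EuclideanSpace ℝ (Fin n) → ℝ)
    (hJdef : ∀ θ, J θ = Jstar + (1 / 2) * ⟪θ - θs, H (θ - θs)⟫)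
    (h : EuclideanSpace ℝ (Fin n) → ℝ) (hh : ContDiff ℝ 2 h)
    (S : Set (EuclideanSpace ℝ (Fin n))) (hSdef : S = {θ | 0 < h θ})
    (hSne : S.Nonempty)
    (Jhat : ℝ → EuclideanSpace ℝ (Fin n) → ℝ)
    (hJhatdef : ∀ μ θ, Jhat μ θ = J θ - μ * Real.log (h θ))
    (r : Fin n → ℝ) (hr : ∀ i, 0 < r i)
    (ω' : Fin n → ℚ) (hω'pos : ∀ i, 0 < ω' i)
    (hω'dist : ∀ i j : Fin n, i ≠ j → ω' i ≠ ω' j)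
    (hω'sum : ∀ i j k : Fin n, i ≠ j → j ≠ k → i ≠ k → ω' i + ω' j ≠ ω' k)
    (T : ℝ) (hT : 0 < T)
    (hper : ∀ i, ∃ z : ℤ, (ω' i : ℝ) * T = 2 * Real.pi * z)
    (sd : ℝ → EuclideanSpace ℝ (Fin n))
    (hsd : ∀ τ i, sd τ i = r i * Real.sin ((ω' i : ℝ) * τ))
    (md : ℝ → ℝ → EuclideanSpace ℝ (Fin n))
    (hmd : ∀ a τ i, md a τ i = (2 / (a * r i)) * Real.sin ((ω' i : ℝ) * τ))
    (μ : ℝ) (hμ : 0 < μ) :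
    ∀ K : Set (EuclideanSpace ℝ (Fin n)), IsCompact K → K ⊆ S →
      ∀ ε > 0, ∃ astar > 0, ∀ a ∈ Set.Ioo 0 astar,
        (∀ θ ∈ K, ∀ τ ∈ Set.Icc (0:ℝ) T, θ + a • sd τ ∈ S) ∧
        ∀ θ ∈ K,
          ‖(1 / T) • (∫ τ in (0:ℝ)..T, Jhat μ (θ + a • sd τ) • md a τ)
              - gradient (Jhat μ) θ‖ ≤ ε := by
  intro K hK hKS ε hε
  have hωpos : ∀ i, (0:ℝ) < (ω' i : ℝ) := fun i => by exact_mod_cast hω'pos i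
  -- smoothness of Jhat μ on S
  have hfeq : Jhat μ = fun θ => Jstar + (1 / 2) * ⟪θ - θs, H (θ - θs)⟫ - μ * Real.log (h θ) := by
    funext θ; rw [hJhatdef, hJdef]
  have hSopen : IsOpen S := by
    rw [hSdef]; exact isOpen_lt continuous_const hh.continuous
  have hfC1 : ∀ θ₀ ∈ S, ContDiffAt ℝ 1 (Jhat μ) θ₀ := by
    intro θ₀ hθ₀
    have hhθ₀ : 0 < h θ₀ := by rw [hSdef] at hθ₀; exact hθ₀
    have h1 : ContDiff ℝ 1 (fun θ : EuclideanSpace ℝ (Fin n) => θ - θs) :=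
      contDiff_id.sub contDiff_const
    have hquad : ContDiff ℝ 1
        (fun θ : EuclideanSpace ℝ (Fin n) => Jstar + (1/2) * ⟪θ - θs, H (θ - θs)⟫) :=
      contDiff_const.add (contDiff_const.mul (h1.inner ℝ (H.contDiff.comp h1)))
    have hlog : ContDiffAt ℝ 1 (fun θ => Real.log (h θ)) θ₀ :=
      (Real.contDiffAt_log.mpr (ne_of_gt hhθ₀)).comp θ₀ ((hh.of_le one_le_two).contDiffAt)
    rw [hfeq]
    exact hquad.contDiffAt.sub (contDiffAt_const.mul hlog)
  have hfdiff : ∀ θ₀ ∈ S, DifferentiableAt ℝ (Jhat μ) θ₀ :=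
    fun θ₀ h₀ => (hfC1 θ₀ h₀).differentiableAt one_ne_zero
  have hDcont : ContinuousOn (fderiv ℝ (Jhat μ)) S :=
    ContDiffOn.continuousOn_fderiv_of_isOpen
      (fun x hx => (hfC1 x hx).contDiffWithinAt) hSopen le_rfl
  -- the dither and the rescaled demodulation signal
  have hsd' : sd = fun τ => (WithLp.toLp 2 (fun i => r i * Real.sin ((ω' i : ℝ) * τ)) : EuclideanSpace ℝ (Fin n)) := by
    funext τ; ext i; exact hsd τ i
  set m1 : ℝ → EuclideanSpace ℝ (Fin n) :=
    fun τ => (WithLp.toLp 2 (fun i => (2 / r i) * Real.sin ((ω' i : ℝ) * τ)) : EuclideanSpace ℝ (Fin n)) with hm1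
  have hsdcont : Continuous sd := by
    rw [hsd']
    refine (PiLp.continuous_toLp 2 _).comp ?_
    exact continuous_pi fun i => continuous_const.mul
      (Real.continuous_sin.comp (continuous_const.mul continuous_id))
  have hm1cont : Continuous m1 := by
    rw [hm1]
    refine (PiLp.continuous_toLp 2 _).comp ?_
    exact continuous_pi fun i => continuous_const.mul
      (Real.continuous_sin.comp (continuous_const.mul continuous_id))
  set R := Real.sqrt (∑ i, (r i)^2) with hR
  have hR0 : 0 ≤ R := Real.sqrt_nonneg _
  have hsdnorm : ∀ τ, ‖sd τ‖ ≤ R := by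
    intro τ
    rw [EuclideanSpace.norm_eq, hR]
    apply Real.sqrt_le_sqrt
    apply Finset.sum_le_sum
    intro i _
    rw [hsd τ i, Real.norm_eq_abs, sq_abs]
    nlinarith [Real.sin_sq_le_one ((ω' i : ℝ) * τ), sq_nonneg (r i), hr i]
  set M := Real.sqrt (∑ i, (2 / r i)^2) with hM
  have hM0 : 0 ≤ M := Real.sqrt_nonneg _
  have hm1norm : ∀ τ, ‖m1 τ‖ ≤ M := by
    intro τ
    rw [EuclideanSpace.norm_eq, hM]
    apply Real.sqrt_le_sqrt
    apply Finset.sum_le_sum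
    intro i _
    have hmi : m1 τ i = (2 / r i) * Real.sin ((ω' i : ℝ) * τ) := rfl
    rw [hmi, Real.norm_eq_abs, sq_abs]
    nlinarith [Real.sin_sq_le_one ((ω' i : ℝ) * τ), sq_nonneg (2 / r i)]
  -- coordinates of interval integrals
  have coord : ∀ (F : ℝ → EuclideanSpace ℝ (Fin n)),
      IntervalIntegrable F MeasureTheory.volume 0 T → ∀ i,
      (∫ τ in (0:ℝ)..T, F τ) i = ∫ τ in (0:ℝ)..T, F τ i := by
    intro F hF i
    have := (EuclideanSpace.proj (𝕜 := ℝ) i).intervalIntegral_comp_comm hF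
    simpa [PiLp.proj_apply] using this.symm
  have hm1intble : IntervalIntegrable m1 MeasureTheory.volume 0 T :=
    hm1cont.intervalIntegrable _ _
  have hm1int0 : (∫ τ in (0:ℝ)..T, m1 τ) = 0 := by
    ext i
    rw [coord m1 hm1intble i]
    have : (fun τ => m1 τ i) = fun τ => (2 / r i) * Real.sin ((ω' i : ℝ) * τ) := rfl
    rw [this, intervalIntegral.integral_const_mul, aux_int_sin _ _ (hper i), mul_zero]
    rfl
  -- the key Fourier identity
  have hsinint : ∀ g : EuclideanSpace ℝ (Fin n),
      (∫ τ in (0:ℝ)..T, (⟪g, sd τ⟫ : ℝ) • m1 τ) = T • g := by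
    intro g
    have hintble : IntervalIntegrable (fun τ => (⟪g, sd τ⟫ : ℝ) • m1 τ) MeasureTheory.volume 0 T :=
      ((Continuous.inner continuous_const hsdcont).fun_smul hm1cont).intervalIntegrable _ _
    ext i
    rw [coord _ hintble i]
    have hexp : (fun τ => ((⟪g, sd τ⟫ : ℝ) • m1 τ) i)
        = fun τ => ∑ j, (g j * r j * (2 / r i)) *
            (Real.sin ((ω' j : ℝ) * τ) * Real.sin ((ω' i : ℝ) * τ)) := by
      funext τ
      have h1 : ((⟪g, sd τ⟫ : ℝ) • m1 τ) i
          = (⟪g, sd τ⟫ : ℝ) * ((2 / r i) * Real.sin ((ω' i : ℝ) * τ)) := rfl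
      rw [h1]
      have h2 : (⟪g, sd τ⟫ : ℝ) = ∑ j, g j * (r j * Real.sin ((ω' j : ℝ) * τ)) := by
        rw [PiLp.inner_apply]
        apply Finset.sum_congr rfl
        intro j _
        rw [hsd τ j, RCLike.inner_apply, conj_trivial]
        ring
      rw [h2, Finset.sum_mul]
      apply Finset.sum_congr rfl
      intro j _
      ring
    rw [hexp, intervalIntegral.integral_finset_sum]
    · have hterm : ∀ j ∈ Finset.univ, (∫ τ in (0:ℝ)..T, (g j * r j * (2 / r i)) *
          (Real.sin ((ω' j : ℝ) * τ) * Real.sin ((ω' i : ℝ) * τ))) = if j = i then T * g i else 0 := by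
        intro j _
        rw [intervalIntegral.integral_const_mul,
          aux_int_sin_sin _ _ _ (hωpos j) (hωpos i) (hper j) (hper i)]
        by_cases hji : j = i
        · subst hji
          rw [if_pos rfl, if_pos rfl]
          have hrj : r j ≠ 0 := (hr j).ne'
          field_simp
        · have : ((ω' j : ℝ)) ≠ ((ω' i : ℝ)) := by
            exact_mod_cast hω'dist j i hji
          rw [if_neg this, if_neg hji, mul_zero]
      rw [Finset.sum_congr rfl hterm, Finset.sum_ite_eq' Finset.univ i (fun _ => T * g i)]
      simp only [Finset.mem_univ, if_pos]
      rfl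
    · intro j _
      exact (Continuous.mul continuous_const ((Real.continuous_sin.comp
        (continuous_const.mul continuous_id)).mul (Real.continuous_sin.comp
        (continuous_const.mul continuous_id)))).intervalIntegrable _ _
  -- thickening of K inside S
  obtain ⟨δ, hδpos, hδsub⟩ := hK.exists_cthickening_subset_open hSopen hKS
  set K' := Metric.cthickening δ K with hK'def
  have hK'cpt : IsCompact K' := hK.cthickening
  have hKK' : K ⊆ K' := Metric.self_subset_cthickening K
  have hK'S : K' ⊆ S := hδsub
  -- uniform continuity of the derivative on K'
  set ε' := ε / (R * M + 1) with hε'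
  have hε'pos : 0 < ε' := by positivity
  have hUC := hK'cpt.uniformContinuousOn_of_continuous (hDcont.mono hK'S)
  rw [Metric.uniformContinuousOn_iff] at hUC
  obtain ⟨δ', hδ'pos, hδ'⟩ := hUC ε' hε'pos
  refine ⟨min δ δ' / (R + 1), by positivity, ?_⟩
  rintro a ⟨ha0, ha1⟩
  have haR : a * R < min δ δ' := by
    calc a * R ≤ a * (R + 1) := by nlinarith
    _ < (min δ δ' / (R + 1)) * (R + 1) := by
        apply mul_lt_mul_of_pos_right ha1
        positivity
    _ = min δ δ' := by field_simp
  have haRδ : a * R ≤ δ := le_of_lt (lt_of_lt_of_le haR (min_le_left _ _))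
  have haRδ' : a * R < δ' := lt_of_lt_of_le haR (min_le_right _ _)
  -- membership of perturbed points
  have hnormas : ∀ τ, ‖a • sd τ‖ ≤ a * R := by
    intro τ
    rw [norm_smul, Real.norm_eq_abs, abs_of_pos ha0]
    exact mul_le_mul_of_nonneg_left (hsdnorm τ) ha0.le
  have hseg : ∀ (θ : EuclideanSpace ℝ (Fin n)), θ ∈ K → ∀ τ : ℝ,
      ∀ z ∈ segment ℝ θ (θ + a • sd τ), z ∈ K' ∧ dist z θ ≤ a * R := by
    intro θ hθ τ z hz
    rw [segment_eq_image'] at hz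
    obtain ⟨t, ht, rfl⟩ := hz
    have hy : θ + a • sd τ - θ = a • sd τ := by abel
    rw [hy]
    have hdist : dist (θ + t • (a • sd τ)) θ ≤ a * R := by
      rw [dist_eq_norm]
      have : θ + t • (a • sd τ) - θ = t • (a • sd τ) := by abel
      rw [this, norm_smul, Real.norm_eq_abs, abs_of_nonneg ht.1]
      calc t * ‖a • sd τ‖ ≤ 1 * (a * R) := by
            apply mul_le_mul ht.2 (hnormas τ) (norm_nonneg _) zero_le_one
      _ = a * R := one_mul _
    constructor
    · exact Metric.mem_cthickening_of_dist_le _ θ δ K hθ (le_trans hdist haRδ)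
    · exact hdist
  have hsafeK' : ∀ (θ : EuclideanSpace ℝ (Fin n)), θ ∈ K → ∀ τ : ℝ, θ + a • sd τ ∈ K' := by
    intro θ hθ τ
    exact (hseg θ hθ τ _ (right_mem_segment ℝ _ _)).1
  have hsafe : ∀ θ ∈ K, ∀ τ ∈ Set.Icc (0:ℝ) T, θ + a • sd τ ∈ S :=
    fun θ hθ τ _ => hK'S (hsafeK' θ hθ τ)
  refine ⟨hsafe, ?_⟩
  intro θ hθ
  set Dθ := fderiv ℝ (Jhat μ) θ with hDθdef
  have hgrad : ∀ v, (⟪gradient (Jhat μ) θ, v⟫ : ℝ) = Dθ v := by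
    intro v
    rw [gradient]
    exact InnerProductSpace.toDual_symm_apply
  set Rem : ℝ → ℝ := fun τ => Jhat μ (θ + a • sd τ) - Jhat μ θ - Dθ (a • sd τ) with hRemdef
  -- remainder bound via the mean value inequality
  have hRembound : ∀ τ : ℝ, |Rem τ| ≤ ε' * (a * R) := by
    intro τ
    have hmvt := Convex.norm_image_sub_le_of_norm_fderiv_le'
      (f := Jhat μ) (φ := Dθ) (C := ε')
      (s := segment ℝ θ (θ + a • sd τ))
      (fun z hz => hfdiff z (hK'S (hseg θ hθ τ z hz).1))
      (fun z hz => by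
        have h1 := hδ' z (hseg θ hθ τ z hz).1 θ (hKK' hθ)
          (lt_of_le_of_lt (hseg θ hθ τ z hz).2 haRδ')
        rw [dist_eq_norm] at h1
        exact le_of_lt h1)
      (convex_segment _ _)
      (left_mem_segment ℝ _ _)
      (right_mem_segment ℝ _ _)
    have hy : θ + a • sd τ - θ = a • sd τ := by abel
    rw [hy] at hmvt
    calc |Rem τ| = ‖Jhat μ (θ + a • sd τ) - Jhat μ θ - Dθ (a • sd τ)‖ := rfl
    _ ≤ ε' * ‖a • sd τ‖ := hmvt
    _ ≤ ε' * (a * R) := mul_le_mul_of_nonneg_left (hnormas τ) hε'pos.le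
  -- continuity of all integrands
  have hcomp : Continuous (fun τ => Jhat μ (θ + a • sd τ)) := by
    rw [continuous_iff_continuousAt]
    intro τ
    have hmap : Continuous (fun τ : ℝ => θ + a • sd τ) :=
      continuous_const.add (hsdcont.const_smul a)
    have hc : ContinuousAt ((Jhat μ) ∘ (fun τ : ℝ => θ + a • sd τ)) τ :=
      ContinuousAt.comp ((hfC1 _ (hK'S (hsafeK' θ hθ τ))).continuousAt) hmap.continuousAt
    exact hc
  have hRemcont : Continuous Rem := by
    rw [hRemdef]
    exact (hcomp.sub continuous_const).sub
      (Dθ.continuous.comp (continuous_const.fun_smul hsdcont))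
  have hint1 : IntervalIntegrable (fun τ => (a⁻¹ * Rem τ) • m1 τ) MeasureTheory.volume 0 T :=
    ((continuous_const.mul hRemcont).smul hm1cont).intervalIntegrable _ _
  have hint2 : IntervalIntegrable (fun τ => (a⁻¹ * Jhat μ θ) • m1 τ) MeasureTheory.volume 0 T :=
    (continuous_const.fun_smul hm1cont).intervalIntegrable _ _
  have hint3 : IntervalIntegrable (fun τ => (Dθ (sd τ)) • m1 τ) MeasureTheory.volume 0 T :=
    ((Dθ.continuous.comp hsdcont).smul hm1cont).intervalIntegrable _ _
  -- decomposition of the integrand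
  have hmd' : ∀ τ, md a τ = a⁻¹ • m1 τ := by
    intro τ
    ext i
    rw [hmd a τ i]
    have : (a⁻¹ • m1 τ) i = a⁻¹ * ((2 / r i) * Real.sin ((ω' i : ℝ) * τ)) := rfl
    rw [this]
    field_simp
  have hdecomp : (fun τ => Jhat μ (θ + a • sd τ) • md a τ)
      = fun τ => (a⁻¹ * Rem τ) • m1 τ
          + ((a⁻¹ * Jhat μ θ) • m1 τ + (Dθ (sd τ)) • m1 τ) := by
    funext τ
    rw [hmd' τ, smul_comm, ← smul_assoc, smul_eq_mul, ← add_smul, ← add_smul]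
    congr 1
    have hDsmul : Dθ (a • sd τ) = a * Dθ (sd τ) := by
      rw [map_smul, smul_eq_mul]
    rw [hRemdef]
    simp only []
    rw [hDsmul]
    field_simp
    ring
  -- the key identity
  have key : (1 / T) • (∫ τ in (0:ℝ)..T, Jhat μ (θ + a • sd τ) • md a τ)
      - gradient (Jhat μ) θ
      = (1 / T) • (∫ τ in (0:ℝ)..T, (a⁻¹ * Rem τ) • m1 τ) := by
    rw [hdecomp, intervalIntegral.integral_add hint1 (hint2.add hint3),
      intervalIntegral.integral_add hint2 hint3]
    have h2 : (∫ τ in (0:ℝ)..T, (a⁻¹ * Jhat μ θ) • m1 τ) = 0 := by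
      rw [intervalIntegral.integral_smul, hm1int0, smul_zero]
    have h3 : (∫ τ in (0:ℝ)..T, (Dθ (sd τ)) • m1 τ) = T • gradient (Jhat μ) θ := by
      have : (fun τ => (Dθ (sd τ)) • m1 τ)
          = fun τ => (⟪gradient (Jhat μ) θ, sd τ⟫ : ℝ) • m1 τ := by
        funext τ
        rw [hgrad]
      rw [this, hsinint]
    rw [h2, h3, zero_add, smul_add, smul_smul, one_div, inv_mul_cancel₀ (ne_of_gt hT), one_smul]
    abel
  rw [key]
  -- final bound
  have hb : ∀ τ ∈ Set.uIoc (0:ℝ) T, ‖(a⁻¹ * Rem τ) • m1 τ‖ ≤ ε' * R * M := by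
    intro τ _
    rw [norm_smul, Real.norm_eq_abs, abs_mul, abs_of_pos (inv_pos.mpr ha0)]
    calc a⁻¹ * |Rem τ| * ‖m1 τ‖ ≤ a⁻¹ * (ε' * (a * R)) * M := by
          apply mul_le_mul
          · exact mul_le_mul_of_nonneg_left (hRembound τ) (inv_pos.mpr ha0).le
          · exact hm1norm τ
          · exact norm_nonneg _
          · positivity
    _ = ε' * R * M := by field_simp
  have hbound := intervalIntegral.norm_integral_le_of_norm_le_const hb
  rw [norm_smul, Real.norm_eq_abs, abs_of_pos (by positivity : (0:ℝ) < 1 / T)]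
  calc (1 / T) * ‖∫ τ in (0:ℝ)..T, (a⁻¹ * Rem τ) • m1 τ‖
      ≤ (1 / T) * (ε' * R * M * |T - 0|) := by
        apply mul_le_mul_of_nonneg_left hbound (by positivity)
  _ = ε' * (R * M) := by
        rw [sub_zero, abs_of_pos hT]
        field_simp
  _ ≤ ε' * (R * M + 1) := by nlinarith
  _ = ε := by rw [hε']; field_simp
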